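/- A class of graphs has bounded shrub-depth if and only if it has bounded SC-depth; that is, a class G is contained in TM(d,m) for some d,m if and only if G ⊆ SC(k) for some k. -/

import Mathlib

/-- Length of the longest common prefix of `f` and `g` (as strings of length `d`). -/
def prefLen {d : ℕ} (f g : Fin d → ℕ) : ℕ :=
  Nat.findGreatest (fun k => ∀ i : Fin d, (i : ℕ) < k → f i = g i) d

/-- A tree-model of `m` colours and depth `d` for the graph `G`:
a rooted tree of uniform root-to-leaf distance `d` whose leaves are exactly `V(G)`
(encoded by the injective map `f` sending each leaf to its root-to-leaf address),
a colouring of the leaves by `m` colours, and a symmetric signature `S` such that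
two distinct vertices `u,v` are adjacent iff `(col u, col v, ℓ) ∈ S`, where `2ℓ`
is the tree-distance between `u` and `v` in the tree. -/
structure TreeModel {V : Type} (G : SimpleGraph V) (d m : ℕ) where
  f : V → Fin d → ℕ
  inj : Function.Injective f
  col : V → Fin m
  S : Fin m → Fin m → ℕ → Prop
  symm : ∀ i j l, S i j l → S j i l
  adj : ∀ u v : V, u ≠ v →
    (G.Adj u v ↔ S (col u) (col v) (d - prefLen (f u) (f v)))

/-- `G ∈ TM(d,m)`. -/
def InTM (d m : ℕ) {V : Type} (G : SimpleGraph V) : Prop :=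
  Nonempty (TreeModel G d m)

/-- The graph obtained from `G` by complementing the edges on the set `X`. -/
def scFlip {V : Type} (G : SimpleGraph V) (X : Set V) : SimpleGraph V :=
  SimpleGraph.fromRel (fun x y =>
    (x ∈ X ∧ y ∈ X ∧ ¬ G.Adj x y) ∨ ((x ∉ X ∨ y ∉ X) ∧ G.Adj x y))

/-- `InSCAux n V G` holds iff `G ∈ SC(n)`: `SC 0 = {K₁}`, and `SC (n+1)` consists of
subset-complementations (on an arbitrary set `X`) of disjoint unions of graphs in `SC n`. -/
def InSCAux : ℕ → (V : Type) → SimpleGraph V → Prop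
  | 0, V, _ => Nonempty V ∧ Subsingleton V
  | n+1, V, G =>
    ∃ (p : ℕ) (π : V → Fin p) (H : SimpleGraph V) (X : Set V),
      (∀ x y, H.Adj x y → π x = π y) ∧
      (∀ i : Fin p, InSCAux n _ (H.induce (π ⁻¹' {i}))) ∧
      G = scFlip H X

/-- `G ∈ SC(n)` (graphs of SC-depth at most `n`). -/
def InSC (n : ℕ) {V : Type} (G : SimpleGraph V) : Prop := InSCAux n V G

theorem prefLen_le {d : ℕ} (f g : Fin d → ℕ) : prefLen f g ≤ d :=
  Nat.findGreatest_le d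

theorem prefLen_spec {d : ℕ} (f g : Fin d → ℕ) :
    ∀ i : Fin d, (i : ℕ) < prefLen f g → f i = g i :=
  Nat.findGreatest_spec (P := fun k => ∀ i : Fin d, (i : ℕ) < k → f i = g i)
    (Nat.zero_le d) (fun _ h => absurd h (Nat.not_lt_zero _))

theorem prefLen_lt_ne {d : ℕ} (f g : Fin d → ℕ) (h : prefLen f g < d) :
    f ⟨prefLen f g, h⟩ ≠ g ⟨prefLen f g, h⟩ := by
  intro heq
  have := Nat.findGreatest_is_greatest
    (P := fun k => ∀ i : Fin d, (i : ℕ) < k → f i = g i)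
    (Nat.lt_succ_self (prefLen f g)) h
  apply this
  intro i hi
  rcases Nat.lt_or_ge (i : ℕ) (prefLen f g) with h' | h'
  · exact prefLen_spec f g i h'
  · have : i = (⟨prefLen f g, h⟩ : Fin d) := Fin.ext (show (i:ℕ) = prefLen f g by omega)
    rw [this]; exact heq

theorem prefLen_eq {d : ℕ} (f g : Fin d → ℕ) (k : ℕ) (hk : k ≤ d)
    (h1 : ∀ i : Fin d, (i : ℕ) < k → f i = g i)
    (h2 : ∀ hkd : k < d, f ⟨k, hkd⟩ ≠ g ⟨k, hkd⟩) : prefLen f g = k := by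
  have hle : k ≤ prefLen f g := Nat.le_findGreatest hk h1
  rcases Nat.lt_or_ge k d with hkd | hkd
  · by_contra hne
    have hlt : k < prefLen f g := lt_of_le_of_ne hle (Ne.symm hne)
    exact h2 hkd (prefLen_spec f g ⟨k, hkd⟩ hlt)
  · have := prefLen_le f g
    omega

theorem prefLen_cons_eq {d : ℕ} (a : ℕ) (f g : Fin d → ℕ) :
    prefLen (Fin.cons a f) (Fin.cons a g) = prefLen f g + 1 := by
  apply prefLen_eq
  · have := prefLen_le f g; omega
  · intro i hi
    rcases Fin.eq_zero_or_eq_succ i with rfl | ⟨j, rfl⟩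
    · simp
    · simp only [Fin.cons_succ]
      exact prefLen_spec f g j (by simpa [Fin.val_succ] using hi)
  · intro hkd
    have hlt : prefLen f g < d := by omega
    have he : (⟨prefLen f g + 1, hkd⟩ : Fin (d+1)) = (⟨prefLen f g, hlt⟩ : Fin d).succ := by
      simp [Fin.ext_iff]
    rw [he, Fin.cons_succ, Fin.cons_succ]
    exact prefLen_lt_ne f g hlt

theorem prefLen_cons_ne {d : ℕ} (a b : ℕ) (hab : a ≠ b) (f g : Fin d → ℕ) :
    prefLen (Fin.cons a f) (Fin.cons b g) = 0 := by
  apply prefLen_eq _ _ 0 (Nat.zero_le _) (fun i hi => absurd hi (Nat.not_lt_zero _))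
  intro h
  simpa using hab

theorem prefLen_eq_of_inj {d : ℕ} {f g : Fin d → ℕ} (h : f ≠ g) : prefLen f g < d := by
  rcases Nat.lt_or_ge (prefLen f g) d with h' | h'
  · exact h'
  · exfalso; apply h; funext i
    exact prefLen_spec f g i (by have := i.isLt; omega)

theorem scFlip_adj {V : Type} (G : SimpleGraph V) (X : Set V) (x y : V) :
    (scFlip G X).Adj x y ↔ x ≠ y ∧ (Xor' (G.Adj x y) (x ∈ X ∧ y ∈ X)) := by
  rw [scFlip, SimpleGraph.fromRel_adj]
  have hc : G.Adj y x ↔ G.Adj x y := G.adj_comm y x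
  unfold Xor' Xor
  tauto

theorem scFlip_empty {V : Type} (G : SimpleGraph V) : scFlip G ∅ = G := by
  ext x y
  rw [scFlip_adj]
  simp only [Set.mem_empty_iff_false, false_and, and_false]
  constructor
  · unfold Xor' Xor; tauto
  · intro h; exact ⟨h.ne, by unfold Xor' Xor; tauto⟩

/-- Transport `InSCAux` across a graph isomorphism (given as an equiv). -/
theorem InSCAux_of_equiv : ∀ (n : ℕ) {V W : Type} (e : V ≃ W)
    {G : SimpleGraph V} {G' : SimpleGraph W}
    (hadj : ∀ x y : V, G.Adj x y ↔ G'.Adj (e x) (e y)),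
    InSCAux n V G → InSCAux n W G'
  | 0, V, W, e, G, G', hadj, ⟨h1, h2⟩ => ⟨⟨e h1.some⟩, ⟨fun a b => by
      have := h2.allEq (e.symm a) (e.symm b)
      simpa using congrArg e this⟩⟩
  | n+1, V, W, e, G, G', hadj, ⟨p, π, H, X, hH, hparts, hG⟩ => by
    refine ⟨p, π ∘ e.symm, ⟨fun x y => H.Adj (e.symm x) (e.symm y), ?_, ?_⟩,
      e.symm ⁻¹' X, ?_, ?_, ?_⟩
    · exact ⟨fun x y h => H.adj_symm h⟩
    · exact ⟨fun x h => H.irrefl h⟩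
    · intro x y h; exact hH _ _ h
    · intro i
      refine InSCAux_of_equiv n (e.subtypeEquiv (fun v => ?_)) (fun x y => ?_) (hparts i)
      · simp
      · simp [SimpleGraph.comap]
    · ext x y
      have h1 : G'.Adj x y ↔ G.Adj (e.symm x) (e.symm y) := by rw [hadj]; simp
      rw [h1, hG, scFlip_adj, scFlip_adj, e.symm.injective.ne_iff]
      exact Iff.rfl

theorem InSCAux_scFlip {V : Type} {n : ℕ} {G : SimpleGraph V} (X : Set V)
    (h : InSCAux n V G) : InSCAux (n+1) V (scFlip G X) := by
  refine ⟨1, fun _ => 0, G, X, fun _ _ _ => rfl, ?_, rfl⟩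
  intro i
  have hall : ∀ v : V, v ∈ ((fun _ => (0 : Fin 1)) ⁻¹' {i} : Set V) := by
    intro v
    simp [Subsingleton.elim (0 : Fin 1) i]
  exact InSCAux_of_equiv n (Equiv.subtypeUnivEquiv hall).symm (fun x y => Iff.rfl) h

theorem InSCAux_succ {V : Type} {n : ℕ} {G : SimpleGraph V}
    (h : InSCAux n V G) : InSCAux (n+1) V G := by
  have := InSCAux_scFlip (∅ : Set V) h
  rwa [scFlip_empty] at this

theorem InSCAux_mono {V : Type} {n k : ℕ} (hnk : n ≤ k) {G : SimpleGraph V}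
    (h : InSCAux n V G) : InSCAux k V G := by
  induction k with
  | zero => exact (Nat.le_zero.mp hnk) ▸ h
  | succ k ih =>
    rcases Nat.lt_or_ge n (k+1) with h' | h'
    · exact InSCAux_succ (ih (by omega))
    · have : n = k + 1 := by omega
      subst this; exact h

open Classical in
theorem sc_model : ∀ (k : ℕ) (V : Type) (G : SimpleGraph V), InSCAux k V G →
    ∃ (f : V → Fin k → ℕ) (col : V → Fin k → Bool), Function.Injective f ∧
      ∀ u v : V, u ≠ v → (G.Adj u v ↔
        Odd ((Finset.univ.filter (fun j : Fin k =>
          (j : ℕ) ≤ prefLen (f u) (f v) ∧ col u j = true ∧ col v j = true)).card))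
  | 0, V, G, ⟨_, h2⟩ => by
    refine ⟨fun _ => Fin.elim0, fun _ => Fin.elim0, fun u v _ => h2.allEq u v, ?_⟩
    intro u v huv
    exact absurd (h2.allEq u v) huv
  | k+1, V, G, ⟨p, π, H, X, hH, hparts, hG⟩ => by
    choose F C hinj hadj using fun i => sc_model k _ _ (hparts i)
    have hmem : ∀ v : V, v ∈ π ⁻¹' {π v} := fun v => rfl
    have hF : ∀ (v : V) (i : Fin p) (h : π v = i),
        F (π v) ⟨v, hmem v⟩ = F i ⟨v, h⟩ := by
      intro v i h; subst h; rfl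
    have hC : ∀ (v : V) (i : Fin p) (h : π v = i),
        C (π v) ⟨v, hmem v⟩ = C i ⟨v, h⟩ := by
      intro v i h; subst h; rfl
    refine ⟨fun v => Fin.cons (π v : ℕ) (F (π v) ⟨v, hmem v⟩),
      fun v => Fin.cons (decide (v ∈ X)) (C (π v) ⟨v, hmem v⟩), ?_, ?_⟩
    · intro u v h
      have h0 : ((π u : ℕ)) = (π v : ℕ) := by
        have := congrFun h 0; simpa using this
      have hπ : π u = π v := Fin.val_injective h0
      have ht : F (π u) ⟨u, hmem u⟩ = F (π v) ⟨v, hmem v⟩ := by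
        funext j
        have := congrFun h j.succ
        simpa [Fin.cons_succ] using this
      rw [hF v (π u) hπ.symm] at ht
      have := hinj (π u) ht
      exact congrArg Subtype.val this
    · intro u v huv
      rw [hG, scFlip_adj]
      beta_reduce
      rcases Classical.em (π u = π v) with hcase | hcase
      · -- same part
        have hne : (⟨u, hmem u⟩ : ↥(π ⁻¹' {π u})) ≠ ⟨v, hcase.symm⟩ := by
          intro hh; exact huv (congrArg Subtype.val hh)
        have hIH := hadj (π u) ⟨u, hmem u⟩ ⟨v, hcase.symm⟩ hne
        have hHadj : (H.induce (π ⁻¹' {π u})).Adj ⟨u, hmem u⟩ ⟨v, hcase.symm⟩ ↔ H.Adj u v :=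
          Iff.rfl
        rw [hHadj] at hIH
        have hval : ((π v : ℕ)) = (π u : ℕ) := by rw [hcase]
        have hodd1 : ∀ n : ℕ, Odd (1 + n) ↔ ¬ Odd n := by
          intro n; rw [Nat.odd_iff, Nat.odd_iff]; omega
        rw [hF v (π u) hcase.symm, hC v (π u) hcase.symm, hval, prefLen_cons_eq,
          Finset.card_filter, Fin.sum_univ_succ]
        simp only [Fin.cons_zero, Fin.cons_succ, Fin.val_succ, Fin.val_zero,
          Nat.zero_le, true_and, decide_eq_true_eq, Nat.add_le_add_iff_right]
        rw [← Finset.card_filter]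
        rcases Classical.em (u ∈ X ∧ v ∈ X) with hX | hX
        · rw [if_pos hX, hodd1]
          unfold Xor' Xor
          rw [hIH]
          tauto
        · rw [if_neg hX, Nat.zero_add]
          unfold Xor' Xor
          rw [hIH]
          tauto
      · -- different parts
        have hnadj : ¬ H.Adj u v := fun h => hcase (hH u v h)
        have hpre : prefLen (Fin.cons (π u : ℕ) (F (π u) ⟨u, hmem u⟩))
            (Fin.cons (π v : ℕ) (F (π v) ⟨v, hmem v⟩)) = 0 :=
          prefLen_cons_ne _ _ (fun h => hcase (Fin.val_injective h)) _ _
        rw [Finset.card_filter, Fin.sum_univ_succ, hpre]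
        simp only [Fin.cons_zero, Fin.cons_succ, Fin.val_succ, Fin.val_zero,
          Nat.le_zero, decide_eq_true_eq]
        have hz : ∀ j : Fin k, (if (j : ℕ) + 1 = 0 ∧ (C (π u) ⟨u, hmem u⟩ j = true
            ∧ C (π v) ⟨v, hmem v⟩ j = true) then 1 else 0) = 0 := by
          intro j; rw [if_neg]; rintro ⟨h, -⟩; omega
        rw [Finset.sum_congr rfl (fun j _ => hz j), Finset.sum_const_zero, Nat.add_zero]
        rcases Classical.em (u ∈ X ∧ v ∈ X) with hX | hX
        · rw [if_pos (by tauto)]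
          have h1 : Odd 1 := odd_one
          unfold Xor' Xor
          tauto
        · rw [if_neg (by tauto)]
          have h0 : ¬ Odd 0 := by simp
          unfold Xor' Xor
          tauto

/-- The graph `G` with adjacency flipped on colour pairs in `R`. -/
def xorGraph {V : Type} {m : ℕ} (G : SimpleGraph V) (col : V → Fin m)
    (R : Fin m → Fin m → Prop) (hsym : ∀ a b, R a b ↔ R b a) : SimpleGraph V where
  Adj u v := u ≠ v ∧ Xor' (G.Adj u v) (R (col u) (col v))
  symm := by
    constructor
    rintro u v ⟨h1, h2⟩
    refine ⟨h1.symm, ?_⟩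
    rw [G.adj_comm, ← hsym (col u) (col v)]
    exact h2
  loopless := ⟨fun u h => h.1 rfl⟩

theorem xorGraph_adj {V : Type} {m : ℕ} (G : SimpleGraph V) (col : V → Fin m)
    (R : Fin m → Fin m → Prop) (hsym : ∀ a b, R a b ↔ R b a) (u v : V) :
    (xorGraph G col R hsym).Adj u v ↔ (u ≠ v ∧ Xor' (G.Adj u v) (R (col u) (col v))) :=
  Iff.rfl

theorem xor_flip_logic (ne A B P Q : Prop) (hBP : P → Q → B) :
    (ne ∧ Xor' A B) ↔ (ne ∧ Xor' (ne ∧ Xor' A (B ∧ ¬(P ∧ Q))) (P ∧ Q)) := by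
  unfold Xor' Xor
  tauto

/-- Fixing the diagonal part of a colour relation by singleton flips. -/
theorem sc_diag {V : Type} {m : ℕ} (col : V → Fin m) :
    ∀ (t : ℕ) (R : Fin m → Fin m → Prop) (hdiag : ∀ i j, R i j → i = j)
    (l : List (Fin m)) (hl : l.length ≤ t) (hcov : ∀ i, R i i → i ∈ l)
    (G G' : SimpleGraph V)
    (hadj : ∀ u v, G'.Adj u v ↔ (u ≠ v ∧ Xor' (G.Adj u v) (R (col u) (col v))))
    {n : ℕ}, InSCAux n V G → InSCAux (n + t) V G' := by
  intro t
  induction t with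
  | zero =>
    intro R hdiag l hl hcov G G' hadj n hG
    have hRfalse : ∀ a b : Fin m, ¬ R a b := by
      intro a b hab
      have hab' : a = b := hdiag a b hab
      subst hab'
      have := hcov a hab
      have := List.length_pos_iff.mpr (List.ne_nil_of_mem this)
      omega
    have : G' = G := by
      ext u v
      rw [hadj]
      unfold Xor' Xor
      have h1 := hRfalse (col u) (col v)
      have h2 : G.Adj u v → u ≠ v := fun h => h.ne
      tauto
    rw [this]
    exact hG
  | succ t ih =>
    intro R hdiag l hl hcov G G' hadj n hG
    rcases Classical.em (∃ i : Fin m, R i i) with ⟨i, hi⟩ | hno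
    · have hil : i ∈ l := hcov i hi
      have hsymR : ∀ a b, R a b ↔ R b a := by
        intro a b
        constructor <;> intro h <;> have := hdiag _ _ h <;> subst this <;> exact h
      have hR''diag : ∀ a b, (R a b ∧ ¬(a = i ∧ b = i)) → a = b := fun a b h => hdiag a b h.1
      have hsymR'' : ∀ a b, (R a b ∧ ¬(a = i ∧ b = i)) ↔ (R b a ∧ ¬(b = i ∧ a = i)) := by
        intro a b
        rw [← hsymR a b]
        tauto
      have hcov'' : ∀ j, (R j j ∧ ¬(j = i ∧ j = i)) → j ∈ l.erase i := by
        rintro j ⟨h1, h2⟩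
        have hji : j ≠ i := by tauto
        rw [List.mem_erase_of_ne hji]
        exact hcov j h1
      have hl'' : (l.erase i).length ≤ t := by
        have := List.length_erase_of_mem hil
        have := List.length_pos_iff.mpr (List.ne_nil_of_mem hil)
        omega
      have hG'' : InSCAux (n + t) V
          (xorGraph G col (fun a b => R a b ∧ ¬(a = i ∧ b = i)) hsymR'') :=
        ih _ hR''diag (l.erase i) hl'' hcov'' G _ (fun u v => Iff.rfl) hG
      have hflip : G' = scFlip
          (xorGraph G col (fun a b => R a b ∧ ¬(a = i ∧ b = i)) hsymR'') (col ⁻¹' {i}) := by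
        ext u v
        rw [hadj, scFlip_adj, xorGraph_adj]
        have hmemu : (u ∈ col ⁻¹' {i}) ↔ col u = i := Iff.rfl
        have hmemv : (v ∈ col ⁻¹' {i}) ↔ col v = i := Iff.rfl
        rw [hmemu, hmemv]
        exact xor_flip_logic _ _ _ _ _ (fun hp hq => by rw [hp, hq]; exact hi)
      rw [hflip]
      exact InSCAux_scFlip (col ⁻¹' {i}) hG''
    · have hRfalse : ∀ a b : Fin m, ¬ R a b := by
        intro a b hab
        have := hdiag a b hab
        subst this
        exact hno ⟨a, hab⟩
      have : G' = G := by
        ext u v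
        rw [hadj]
        unfold Xor' Xor
        have h1 := hRfalse (col u) (col v)
        have h2 : G.Adj u v → u ≠ v := fun h => h.ne
        tauto
      rw [this]
      exact InSCAux_mono (by omega) hG

theorem xor_flip_logic2 (ne A B PQ : Prop) :
    (ne ∧ Xor' A B) ↔ (ne ∧ Xor' (ne ∧ Xor' A (Xor' B PQ)) PQ) := by
  unfold Xor' Xor
  tauto

/-- Realizing an arbitrary symmetric colour relation by subset flips. -/
theorem sc_off {V : Type} {m : ℕ} (col : V → Fin m) :
    ∀ (t : ℕ) (R : Fin m → Fin m → Prop) (hsym : ∀ i j, R i j ↔ R j i)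
    (l : List (Fin m × Fin m)) (hl : l.length ≤ t)
    (hcov : ∀ c d : Fin m, c < d → R c d → (c, d) ∈ l)
    (G G' : SimpleGraph V)
    (hadj : ∀ u v, G'.Adj u v ↔ (u ≠ v ∧ Xor' (G.Adj u v) (R (col u) (col v))))
    {n : ℕ}, InSCAux n V G → InSCAux (n + t + m) V G' := by
  intro t
  induction t with
  | zero =>
    intro R hsym l hl hcov G G' hadj n hG
    have hdiag : ∀ i j, R i j → i = j := by
      intro i j hij
      rcases lt_trichotomy i j with h | h | h
      · exfalso
        have := hcov i j h hij
        have := List.length_pos_iff.mpr (List.ne_nil_of_mem this)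
        omega
      · exact h
      · exfalso
        have := hcov j i h ((hsym i j).mp hij)
        have := List.length_pos_iff.mpr (List.ne_nil_of_mem this)
        omega
    have := sc_diag col m R hdiag (List.finRange m) (by simp) (fun i _ => List.mem_finRange i)
      G G' hadj hG
    exact InSCAux_mono (by omega) this
  | succ t ih =>
    intro R hsym l hl hcov G G' hadj n hG
    rcases Classical.em (∃ cd : Fin m × Fin m, cd.1 < cd.2 ∧ R cd.1 cd.2) with ⟨⟨a, b⟩, hab, hR⟩ | hno
    · simp only at hab hR
      have habl : (a, b) ∈ l := hcov a b hab hR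
      have hsymR'' : ∀ c d, (Xor' (R c d) ((c = a ∨ c = b) ∧ (d = a ∨ d = b))) ↔
          (Xor' (R d c) ((d = a ∨ d = b) ∧ (c = a ∨ c = b))) := by
        intro c d
        rw [← hsym c d]
        unfold Xor' Xor
        tauto
      have hcov'' : ∀ c d : Fin m, c < d →
          (Xor' (R c d) ((c = a ∨ c = b) ∧ (d = a ∨ d = b))) → (c, d) ∈ l.erase (a, b) := by
        intro c d hcd hR''
        rcases Classical.em ((c, d) = (a, b)) with heq | hne
        · exfalso
          have hc : c = a := congrArg Prod.fst heq
          have hd : d = b := congrArg Prod.snd heq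
          subst hc; subst hd
          unfold Xor' Xor at hR''
          tauto
        · rw [List.mem_erase_of_ne hne]
          have hPQ : ¬((c = a ∨ c = b) ∧ (d = a ∨ d = b)) := by
            rintro ⟨hc | hc, hd | hd⟩ <;> subst hc <;> subst hd <;>
              first
                | exact hne rfl
                | omega
                | exact absurd hcd (lt_irrefl _)
                | exact absurd (hcd.trans hab) (lt_irrefl _)
                | exact absurd (hab.trans hcd) (lt_irrefl _)
                | skip
          apply hcov c d hcd
          unfold Xor' Xor at hR''
          tauto
      have hl'' : (l.erase (a, b)).length ≤ t := by
        have := List.length_erase_of_mem habl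
        have := List.length_pos_iff.mpr (List.ne_nil_of_mem habl)
        omega
      have hG'' : InSCAux (n + t + m) V
          (xorGraph G col (fun c d => Xor' (R c d) ((c = a ∨ c = b) ∧ (d = a ∨ d = b)))
            hsymR'') :=
        ih _ hsymR'' (l.erase (a, b)) hl'' hcov'' G _ (fun u v => Iff.rfl) hG
      have hflip : G' = scFlip
          (xorGraph G col (fun c d => Xor' (R c d) ((c = a ∨ c = b) ∧ (d = a ∨ d = b)))
            hsymR'') (col ⁻¹' {a, b}) := by
        ext u v
        rw [hadj, scFlip_adj, xorGraph_adj]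
        have hmemu : (u ∈ col ⁻¹' {a, b}) ↔ (col u = a ∨ col u = b) := by
          simp [Set.mem_insert_iff]
        have hmemv : (v ∈ col ⁻¹' {a, b}) ↔ (col v = a ∨ col v = b) := by
          simp [Set.mem_insert_iff]
        rw [hmemu, hmemv]
        exact xor_flip_logic2 _ _ _ _
      rw [hflip]
      exact InSCAux_mono (by omega) (InSCAux_scFlip _ hG'')
    · have hdiag : ∀ i j, R i j → i = j := by
        intro i j hij
        rcases lt_trichotomy i j with h | h | h
        · exact absurd ⟨(i, j), h, hij⟩ hno
        · exact h
        · exact absurd ⟨(j, i), h, (hsym i j).mp hij⟩ hno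
      have := sc_diag col m R hdiag (List.finRange m) (by simp)
        (fun i _ => List.mem_finRange i) G G' hadj hG
      exact InSCAux_mono (by omega) this

theorem xor_unflip (ne A B : Prop) (h : A → ne) :
    A ↔ (ne ∧ Xor' (ne ∧ Xor' A B) B) := by
  unfold Xor' Xor
  tauto

theorem tm_to_sc (d : ℕ) : ∀ {m : ℕ} (V : Type) [Fintype V] (G : SimpleGraph V),
    TreeModel G d m → InSCAux (1 + d * (m * m + m + 1)) V G := by
  induction d with
  | zero =>
    intro m V _ G tm
    rcases isEmpty_or_nonempty V with hV | hV
    · refine InSCAux_mono (Nat.le_add_right 1 _) ?_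
      exact ⟨0, fun v => (hV.false v).elim, G, ∅, fun x _ _ => (hV.false x).elim,
        fun i => Fin.elim0 i, (scFlip_empty G).symm⟩
    · refine InSCAux_mono (Nat.zero_le _) ?_
      exact ⟨hV, ⟨fun a b => tm.inj (funext fun i => Fin.elim0 i)⟩⟩
  | succ d ih =>
    intro m V _ G tm
    classical
    set s : Finset ℕ := Finset.univ.image (fun v => tm.f v 0) with hs
    let oi := s.orderIsoOfFin rfl
    set π : V → Fin s.card :=
      (fun v => oi.symm ⟨tm.f v 0, Finset.mem_image_of_mem _ (Finset.mem_univ v)⟩) with hπdef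
    have hπ : ∀ u v : V, π u = π v ↔ tm.f u 0 = tm.f v 0 := by
      intro u v
      constructor
      · intro h
        exact congrArg Subtype.val (oi.symm.injective h)
      · intro h
        apply congrArg oi.symm
        exact Subtype.ext h
    have hsymR : ∀ a b : Fin m, tm.S a b (d+1) ↔ tm.S b a (d+1) :=
      fun a b => ⟨tm.symm a b (d+1), tm.symm b a (d+1)⟩
    set B : SimpleGraph V := xorGraph G tm.col (fun a b => tm.S a b (d+1)) hsymR with hBdef
    have hBadj : ∀ u v, B.Adj u v ↔
        (u ≠ v ∧ Xor' (G.Adj u v) (tm.S (tm.col u) (tm.col v) (d+1))) := fun u v => Iff.rfl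
    -- B has no edges between distinct π-classes
    have hB : ∀ x y : V, B.Adj x y → π x = π y := by
      intro x y hxy
      by_contra hne
      have hne0 : tm.f x 0 ≠ tm.f y 0 := fun h => hne ((hπ x y).mpr h)
      have hxy' : x ≠ y := fun h => hne (by rw [h])
      have hpre : prefLen (tm.f x) (tm.f y) = 0 := by
        refine prefLen_eq _ _ 0 (Nat.zero_le _) (fun i hi => absurd hi (Nat.not_lt_zero _)) ?_
        intro h0
        have : (⟨0, h0⟩ : Fin (d+1)) = 0 := rfl
        rw [this]
        exact hne0
      have hGxy := tm.adj x y hxy'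
      rw [hpre, Nat.sub_zero] at hGxy
      rw [hBadj, hGxy] at hxy
      unfold Xor' Xor at hxy
      tauto
    -- tree models for the parts of B
    have hpart : ∀ i : Fin s.card, TreeModel (B.induce (π ⁻¹' {i})) d m := by
      intro i
      refine ⟨fun u => Fin.tail (tm.f u.1), ?_, fun u => tm.col u.1,
        fun a b l => Xor' (tm.S a b l) (tm.S a b (d+1)), ?_, ?_⟩
      · intro u v h
        have h0 : tm.f u.1 0 = tm.f v.1 0 := (hπ u.1 v.1).mp (u.2.trans v.2.symm)
        have : tm.f u.1 = tm.f v.1 := by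
          funext j
          rcases Fin.eq_zero_or_eq_succ j with rfl | ⟨k, rfl⟩
          · exact h0
          · exact congrFun h k
        exact Subtype.ext (tm.inj this)
      · intro a b l h
        unfold Xor' Xor at h ⊢
        rcases h with ⟨h1, h2⟩ | ⟨h1, h2⟩
        · exact Or.inl ⟨tm.symm a b l h1, fun hc => h2 (tm.symm b a (d+1) hc)⟩
        · exact Or.inr ⟨tm.symm a b (d+1) h1, fun hc => h2 (tm.symm b a l hc)⟩
      · intro u v huv
        have huv1 : u.1 ≠ v.1 := fun h => huv (Subtype.ext h)
        have h0 : tm.f u.1 0 = tm.f v.1 0 := (hπ u.1 v.1).mp (u.2.trans v.2.symm)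
        have hpre : prefLen (Fin.cons (tm.f u.1 0) (Fin.tail (tm.f u.1)))
            (Fin.cons (tm.f u.1 0) (Fin.tail (tm.f v.1)))
            = prefLen (Fin.tail (tm.f u.1)) (Fin.tail (tm.f v.1)) + 1 :=
          prefLen_cons_eq _ _ _
        have e1 : Fin.cons (tm.f u.1 0) (Fin.tail (tm.f u.1)) = tm.f u.1 :=
          Fin.cons_self_tail _
        have e2 : Fin.cons (tm.f u.1 0) (Fin.tail (tm.f v.1)) = tm.f v.1 := by
          rw [h0]
          exact Fin.cons_self_tail _
        rw [e1, e2] at hpre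
        have hGadj := tm.adj u.1 v.1 huv1
        rw [hpre, Nat.succ_sub_succ] at hGadj
        have hind : (B.induce (π ⁻¹' {i})).Adj u v ↔ B.Adj u.1 v.1 := Iff.rfl
        rw [hind, hBadj, hGadj]
        constructor
        · rintro ⟨-, hx⟩; exact hx
        · intro hx; exact ⟨huv1, hx⟩
    have hBsc : InSCAux (1 + d * (m * m + m + 1) + 1) V B :=
      ⟨s.card, π, B, ∅, hB, fun i => ih _ _ (hpart i), (scFlip_empty B).symm⟩
    -- now flip the cross edges back in
    have hadjBG : ∀ u v, G.Adj u v ↔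
        (u ≠ v ∧ Xor' (B.Adj u v) (tm.S (tm.col u) (tm.col v) (d+1))) := by
      intro u v
      rw [hBadj]
      exact xor_unflip _ _ _ (fun h => h.ne)
    have hlen : ((List.finRange m) ×ˢ (List.finRange m)).length ≤ m * m := by
      simp [List.length_product]
    have hcov : ∀ c d' : Fin m, c < d' → tm.S c d' (d+1) →
        (c, d') ∈ (List.finRange m) ×ˢ (List.finRange m) := by
      intro c d' _ _
      rw [List.mem_product]
      exact ⟨List.mem_finRange c, List.mem_finRange d'⟩
    have := sc_off tm.col (m * m) (fun a b => tm.S a b (d+1)) hsymR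
      _ hlen hcov B G hadjBG hBsc
    refine InSCAux_mono (le_of_eq ?_) this
    ring

theorem inTM_of_inSCAux (k : ℕ) (V : Type) (G : SimpleGraph V) (h : InSCAux k V G) :
    InTM k (2 ^ k) G := by
  obtain ⟨f, col, hinj, hadj⟩ := sc_model k V G h
  have hcard : Fintype.card (Fin k → Bool) = 2 ^ k := by simp
  let e := Fintype.equivFinOfCardEq hcard
  refine ⟨⟨f, hinj, fun v => e (col v),
    fun a b l => Odd ((Finset.univ.filter (fun j : Fin k =>
      (j : ℕ) ≤ k - l ∧ e.symm a j = true ∧ e.symm b j = true)).card), ?_, ?_⟩⟩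
  · intro i j l hodd
    have heq : (Finset.univ.filter (fun jj : Fin k =>
        (jj : ℕ) ≤ k - l ∧ e.symm j jj = true ∧ e.symm i jj = true))
        = (Finset.univ.filter (fun jj : Fin k =>
        (jj : ℕ) ≤ k - l ∧ e.symm i jj = true ∧ e.symm j jj = true)) := by
      apply Finset.filter_congr
      intro x _
      tauto
    rw [heq]
    exact hodd
  · intro u v huv
    rw [hadj u v huv]
    have hsub : k - (k - prefLen (f u) (f v)) = prefLen (f u) (f v) :=
      Nat.sub_sub_self (prefLen_le _ _)
    simp only [Equiv.symm_apply_apply, hsub]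

/-- A class of finite graphs has bounded shrub-depth iff it has bounded SC-depth. -/
theorem stmt_11 (C : ∀ (V : Type) [Fintype V], SimpleGraph V → Prop) :
    (∃ d m : ℕ, ∀ (V : Type) [Fintype V] (G : SimpleGraph V), C V G → InTM d m G) ↔
    (∃ k : ℕ, ∀ (V : Type) [Fintype V] (G : SimpleGraph V), C V G → InSC k G) := by
  constructor
  · rintro ⟨d, m, h⟩
    exact ⟨1 + d * (m * m + m + 1), fun V _ G hc => tm_to_sc d V G (h V G hc).some⟩
  · rintro ⟨k, h⟩
    exact ⟨k, 2 ^ k, fun V _ G hc => inTM_of_inSCAux k V G (h V G hc)⟩
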